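/- Let ε ∈ [0,1), let ρ*_ε = max over p ∈ [0,1/2] of H_b(p)/(p + 1/(1-ε)), and let p_ε be the corresponding maximizer. Then for every z ∈ [0, p_ε], the supremum over δ ∈ [0, z] of (1-ε)·H_b(δ) - δ·(1-ε)·ρ*_ε equals (1-ε)·H_b(z) - z·(1-ε)·ρ*_ε. -/

import Mathlib

/-- Binary entropy function (base 2), with the convention `0 * log 0 = 0`. -/
noncomputable def Hb (p : ℝ) : ℝ := -p * Real.logb 2 p - (1 - p) * Real.logb 2 (1 - p)

lemma Hb_eq (p : ℝ) : Hb p = (Real.log 2)⁻¹ * Real.binEntropy p := by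
  unfold Hb Real.binEntropy Real.logb
  rw [Real.log_inv, Real.log_inv]
  field_simp
  ring

lemma Hb_concave : ConcaveOn ℝ (Set.Icc (0:ℝ) 1) Hb := by
  have h2 := Real.strictConcave_binEntropy.concaveOn.smul (c := (Real.log 2)⁻¹)
    (by positivity)
  have hfun : Hb = fun x => (Real.log 2)⁻¹ • Real.binEntropy x := by
    funext p
    simp [Hb_eq, smul_eq_mul]
  rw [hfun]; exact h2

lemma g_concave (ρ : ℝ) : ConcaveOn ℝ (Set.Icc (0:ℝ) 1) (fun p => Hb p - p * ρ) := by
  refine ⟨convex_Icc 0 1, fun x hx y hy a b ha hb hab => ?_⟩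
  have := Hb_concave.2 hx hy ha hb hab
  simp only [smul_eq_mul] at *
  nlinarith [this]

theorem sup_up_to_z (ε ρ pε : ℝ) (hε0 : 0 ≤ ε) (hε1 : ε < 1)
    (hpε : pε ∈ Set.Icc (0 : ℝ) (1 / 2))
    (hmax : ∀ q ∈ Set.Icc (0 : ℝ) (1 / 2),
      Hb q / (q + 1 / (1 - ε)) ≤ Hb pε / (pε + 1 / (1 - ε)))
    (hρ : ρ = Hb pε / (pε + 1 / (1 - ε))) :
    ∀ z ∈ Set.Icc (0 : ℝ) pε,
      sSup ((fun δ => (1 - ε) * Hb δ - δ * (1 - ε) * ρ) '' Set.Icc (0 : ℝ) z)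
        = (1 - ε) * Hb z - z * (1 - ε) * ρ := by
  intro z hz
  obtain ⟨hz0, hzp⟩ := hz
  obtain ⟨hp0, hp2⟩ := hpε
  set c : ℝ := 1 / (1 - ε) with hc
  have hε : (0:ℝ) < 1 - ε := by linarith
  have hcpos : 0 < c := by positivity
  -- g q ≤ ρ * c for q ∈ [0, 1/2]
  have hub : ∀ q ∈ Set.Icc (0:ℝ) (1/2), Hb q - q * ρ ≤ ρ * c := by
    intro q hq
    have hden : 0 < q + c := by have := hq.1; linarith
    have h1 : Hb q / (q + c) ≤ ρ := by rw [hρ]; exact hmax q hq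
    have h2 : Hb q ≤ ρ * (q + c) := by
      rw [div_le_iff₀ hden] at h1; linarith [h1]
    nlinarith
  -- g pε = ρ * c
  have hgp : Hb pε - pε * ρ = ρ * c := by
    have hden : (pε + c) ≠ 0 := by positivity
    have : ρ * (pε + c) = Hb pε := by
      rw [hρ]; field_simp
    nlinarith [this]
  -- key monotonicity: for δ ∈ [0, z], g δ ≤ g z
  have key : ∀ δ ∈ Set.Icc (0:ℝ) z, Hb δ - δ * ρ ≤ Hb z - z * ρ := by
    intro δ ⟨hδ0, hδz⟩
    rcases eq_or_lt_of_le (hδz.trans hzp) with heq | hlt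
    · -- δ = pε, so δ = z = pε
      have h1 : δ = z := le_antisymm hδz (heq ▸ hzp)
      rw [h1]
    · -- δ < pε, write z = a δ + b pε
      set a : ℝ := (pε - z) / (pε - δ)
      set b : ℝ := (z - δ) / (pε - δ)
      have hd : (0:ℝ) < pε - δ := by linarith
      have ha : 0 ≤ a := by apply div_nonneg <;> linarith
      have hb : 0 ≤ b := by apply div_nonneg <;> linarith
      have hne : pε - δ ≠ 0 := hd.ne'
      have hab : a + b = 1 := by
        rw [← add_div, div_eq_one_iff_eq hne]; ring
      have hcomb : a • δ + b • pε = z := by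
        simp only [smul_eq_mul, a, b]
        rw [div_mul_eq_mul_div, div_mul_eq_mul_div, ← add_div, div_eq_iff hne]; ring
      have hδmem : δ ∈ Set.Icc (0:ℝ) 1 := ⟨hδ0, by linarith⟩
      have hpmem : pε ∈ Set.Icc (0:ℝ) 1 := ⟨hp0, by linarith⟩
      have hconc := (g_concave ρ).2 hδmem hpmem ha hb hab
      rw [hcomb] at hconc
      simp only [smul_eq_mul] at hconc
      have hgd : Hb δ - δ * ρ ≤ ρ * c := hub δ ⟨hδ0, by linarith⟩
      rw [hgp] at hconc
      have haeq : a = 1 - b := by linarith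
      rw [haeq] at hconc
      nlinarith [mul_le_mul_of_nonneg_left hgd hb]
  -- conclude via IsGreatest
  have hmem : (1 - ε) * Hb z - z * (1 - ε) * ρ ∈
      (fun δ => (1 - ε) * Hb δ - δ * (1 - ε) * ρ) '' Set.Icc (0 : ℝ) z :=
    ⟨z, ⟨hz0, le_refl z⟩, rfl⟩
  apply IsGreatest.csSup_eq
  refine ⟨hmem, ?_⟩
  rintro y ⟨δ, hδ, rfl⟩
  have h := key δ hδ
  show (1 - ε) * Hb δ - δ * (1 - ε) * ρ ≤ (1 - ε) * Hb z - z * (1 - ε) * ρ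
  nlinarith [mul_le_mul_of_nonneg_left h hε.le]
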